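/- Let M̂ ∈ ℝ^{d×d} be symmetric positive semidefinite with rank at most k and largest eigenvalue ζ_1. Let E ∈ ℝ^{d×d} be symmetric positive semidefinite with eigenvalues e_1 ≥ e_2 ≥ … ≥ e_d ≥ 0 in non-increasing order. Let W ∈ ℝ^{r×d} satisfy W Wᵀ = I_r. Let G, Ĝ ∈ ℝ^{r×r} be symmetric positive definite with G − Ĝ = W E Wᵀ, with G − σ² I_r and Ĝ − σ² I_r positive semidefinite for some σ² > 0, and let L, L̂ ∈ ℝ^{r×r} satisfy L Lᵀ = G^{-1} and L̂ L̂ᵀ = Ĝ^{-1}. Then |(1/2)·log det(I_r + Lᵀ W M̂ Wᵀ L) − (1/2)·log det(I_r + L̂ᵀ W M̂ Wᵀ L̂)| ≤ (1/2)·Σ_{i=1}^k log(1 + e_i ζ_1 / σ⁴). -/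

import Mathlib

open Matrix

set_option linter.unusedSectionVars false
set_option linter.unusedVariables false
set_option maxHeartbeats 1000000


/-- `eigs M i` is the `i`-th largest eigenvalue of a Hermitian (symmetric) real matrix `M`
(junk value `0` if `M` is not Hermitian). -/
noncomputable def eigs {d : ℕ} (M : Matrix (Fin d) (Fin d) ℝ) : Fin d → ℝ :=
  if h : M.IsHermitian then
    fun i => (h.eigenvalues ∘ Tuple.sort h.eigenvalues) i.rev
  else 0

namespace Matrix.PosSemidef
open scoped MatrixOrder

noncomputable def sqrt {n : Type*} [Fintype n] [DecidableEq n] {A : Matrix n n ℝ}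
    (_hA : A.PosSemidef) : Matrix n n ℝ := CFC.sqrt A

lemma posSemidef_sqrt {n : Type*} [Fintype n] [DecidableEq n] {A : Matrix n n ℝ}
    (hA : A.PosSemidef) : hA.sqrt.PosSemidef := (CFC.sqrt_nonneg A).posSemidef

lemma sqrt_mul_self {n : Type*} [Fintype n] [DecidableEq n] {A : Matrix n n ℝ}
    (hA : A.PosSemidef) : hA.sqrt * hA.sqrt = A := CFC.sqrt_mul_sqrt_self A hA.nonneg

end Matrix.PosSemidef

namespace EigAux
variable {n : Type*} [Fintype n] [DecidableEq n]

lemma conjT_eq {m : Type*} (A : Matrix m n ℝ) : Aᴴ = Aᵀ := by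
  ext i j; simp [Matrix.conjTranspose_apply]

lemma conjT_eq' {m : Type*} [Fintype m] (A : Matrix n m ℝ) : Aᴴ = Aᵀ := by
  ext i j; simp [Matrix.conjTranspose_apply]

lemma psd_conj {m : Type*} [Fintype m] {A : Matrix n n ℝ} (hA : A.PosSemidef)
    (B : Matrix m n ℝ) : (B * A * Bᵀ).PosSemidef := by
  have := hA.mul_mul_conjTranspose_same B
  rwa [conjT_eq] at this

lemma le_trans' {A B C : Matrix n n ℝ} (h1 : (B - A).PosSemidef) (h2 : (C - B).PosSemidef) :
    (C - A).PosSemidef := by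
  have := h2.add h1
  rwa [sub_add_sub_cancel] at this

lemma le_conj {m : Type*} [Fintype m] [DecidableEq m] {A B : Matrix n n ℝ}
    (h : (B - A).PosSemidef) (C : Matrix m n ℝ) :
    (C * B * Cᵀ - C * A * Cᵀ).PosSemidef := by
  have := psd_conj h C
  rwa [Matrix.mul_sub, Matrix.sub_mul] at this

lemma psd_smul {A : Matrix n n ℝ} (hA : A.PosSemidef) {c : ℝ} (hc : 0 ≤ c) :
    (c • A).PosSemidef := by
  refine Matrix.PosSemidef.of_dotProduct_mulVec_nonneg ?_ fun x => ?_
  · have h1 := hA.1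
    unfold Matrix.IsHermitian at *
    rw [conjT_eq] at *
    rw [Matrix.transpose_smul, h1]
  · have := hA.dotProduct_mulVec_nonneg x
    simp only [Matrix.smul_mulVec, dotProduct_smul, smul_eq_mul]
    exact mul_nonneg hc this

lemma dot_self_nonneg (v : n → ℝ) : 0 ≤ v ⬝ᵥ v :=
  Finset.sum_nonneg fun i _ => mul_self_nonneg _

lemma dot_self_pos {v : n → ℝ} (hv : v ≠ 0) : 0 < v ⬝ᵥ v :=
  (dot_self_nonneg v).lt_of_ne fun h => hv (dotProduct_self_eq_zero.mp h.symm)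

section Spectral
variable {M : Matrix n n ℝ} (hM : M.IsHermitian)

lemma UtU : (hM.eigenvectorUnitary : Matrix n n ℝ)ᵀ * (hM.eigenvectorUnitary : Matrix n n ℝ) = 1 := by
  rw [← conjT_eq, ← Matrix.star_eq_conjTranspose]
  exact Unitary.coe_star_mul_self hM.eigenvectorUnitary

lemma UUt : (hM.eigenvectorUnitary : Matrix n n ℝ) * (hM.eigenvectorUnitary : Matrix n n ℝ)ᵀ = 1 := by
  rw [← conjT_eq, ← Matrix.star_eq_conjTranspose]
  exact Unitary.coe_mul_star_self hM.eigenvectorUnitary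

lemma spectral_real :
    M = (hM.eigenvectorUnitary : Matrix n n ℝ) * diagonal hM.eigenvalues *
      (hM.eigenvectorUnitary : Matrix n n ℝ)ᵀ := by
  have h := hM.spectral_theorem
  rw [Unitary.conjStarAlgAut_apply, Matrix.star_eq_conjTranspose, conjT_eq] at h
  have he : (RCLike.ofReal ∘ hM.eigenvalues : n → ℝ) = hM.eigenvalues := by
    funext j; simp
  rw [he] at h
  exact h

lemma quad_eq (x : n → ℝ) :
    x ⬝ᵥ (M *ᵥ x) = ∑ j, hM.eigenvalues j *
      (((hM.eigenvectorUnitary : Matrix n n ℝ)ᵀ *ᵥ x) j)^2 := by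
  set U := (hM.eigenvectorUnitary : Matrix n n ℝ) with hU
  conv_lhs => rw [spectral_real hM]
  rw [← Matrix.mulVec_mulVec, ← Matrix.mulVec_mulVec]
  rw [Matrix.dotProduct_mulVec x U]
  have hvm : x ᵥ* U = Uᵀ *ᵥ x := by rw [← Matrix.mulVec_transpose]
  rw [hvm]
  simp only [Matrix.mulVec_diagonal, dotProduct]
  exact Finset.sum_congr rfl fun j _ => by ring

lemma norm_eq (x : n → ℝ) :
    x ⬝ᵥ x = ∑ j, (((hM.eigenvectorUnitary : Matrix n n ℝ)ᵀ *ᵥ x) j)^2 := by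
  set U := (hM.eigenvectorUnitary : Matrix n n ℝ) with hU
  have h1 : ∑ j, ((Uᵀ *ᵥ x) j)^2 = (Uᵀ *ᵥ x) ⬝ᵥ (Uᵀ *ᵥ x) := by
    simp only [dotProduct]; exact Finset.sum_congr rfl fun j _ => by ring
  rw [h1, Matrix.dotProduct_mulVec]
  have hvm : (Uᵀ *ᵥ x) ᵥ* Uᵀ = U *ᵥ (Uᵀ *ᵥ x) := by
    rw [← Matrix.mulVec_transpose, Matrix.transpose_transpose]
  rw [hvm, Matrix.mulVec_mulVec, UUt hM, Matrix.one_mulVec, dotProduct_comm]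

lemma eigenvectorBasis_ne_zero (j : n) : (⇑(hM.eigenvectorBasis j) : n → ℝ) ≠ 0 := by
  intro h0
  have h1 : ‖hM.eigenvectorBasis j‖ = 1 := hM.eigenvectorBasis.orthonormal.1 j
  have h2 : hM.eigenvectorBasis j = 0 := by
    ext i
    exact congrFun h0 i
  rw [h2, norm_zero] at h1
  norm_num at h1

lemma eig_le_of_psd {t : ℝ} (h : (t • (1 : Matrix n n ℝ) - M).PosSemidef) (j : n) :
    hM.eigenvalues j ≤ t := by
  set v : n → ℝ := ⇑(hM.eigenvectorBasis j) with hv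
  have hv0 : v ≠ 0 := eigenvectorBasis_ne_zero hM j
  have hMv : M *ᵥ v = hM.eigenvalues j • v := hM.mulVec_eigenvectorBasis j
  have h2 := h.dotProduct_mulVec_nonneg v
  rw [star_trivial, Matrix.sub_mulVec, Matrix.smul_mulVec, Matrix.one_mulVec, hMv,
    dotProduct_sub, dotProduct_smul, dotProduct_smul] at h2
  have hvv : 0 < v ⬝ᵥ v := dot_self_pos hv0
  simp only [smul_eq_mul] at h2
  nlinarith

lemma eig_ge_of_psd {t : ℝ} (h : (M - t • (1 : Matrix n n ℝ)).PosSemidef) (j : n) :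
    t ≤ hM.eigenvalues j := by
  set v : n → ℝ := ⇑(hM.eigenvectorBasis j) with hv
  have hv0 : v ≠ 0 := eigenvectorBasis_ne_zero hM j
  have hMv : M *ᵥ v = hM.eigenvalues j • v := hM.mulVec_eigenvectorBasis j
  have h2 := h.dotProduct_mulVec_nonneg v
  rw [star_trivial, Matrix.sub_mulVec, Matrix.smul_mulVec, Matrix.one_mulVec, hMv,
    dotProduct_sub, dotProduct_smul, dotProduct_smul] at h2
  have hvv : 0 < v ⬝ᵥ v := dot_self_pos hv0
  simp only [smul_eq_mul] at h2
  nlinarith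

lemma psd_smul_one_sub {t : ℝ} (ht : ∀ j, hM.eigenvalues j ≤ t) :
    (t • (1 : Matrix n n ℝ) - M).PosSemidef := by
  refine Matrix.PosSemidef.of_dotProduct_mulVec_nonneg ?_ fun x => ?_
  · have h1 := hM
    unfold Matrix.IsHermitian at *
    rw [conjT_eq] at *
    rw [Matrix.transpose_sub, Matrix.transpose_smul, Matrix.transpose_one, h1]
  · rw [star_trivial, Matrix.sub_mulVec, Matrix.smul_mulVec, Matrix.one_mulVec,
      dotProduct_sub, dotProduct_smul]
    rw [quad_eq hM x, norm_eq hM x, smul_eq_mul, Finset.mul_sum, ← Finset.sum_sub_distrib]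
    refine Finset.sum_nonneg fun j _ => ?_
    have := ht j
    nlinarith [sq_nonneg (((hM.eigenvectorUnitary : Matrix n n ℝ)ᵀ *ᵥ x) j)]

lemma det_eq_prod_eigs : M.det = ∏ j, hM.eigenvalues j := by
  conv_lhs => rw [spectral_real hM]
  rw [Matrix.det_mul, Matrix.det_mul]
  rw [Matrix.det_diagonal]
  have : (hM.eigenvectorUnitary : Matrix n n ℝ).det *
      ((hM.eigenvectorUnitary : Matrix n n ℝ)ᵀ).det = 1 := by
    rw [← Matrix.det_mul, UUt hM, Matrix.det_one]
  calc (hM.eigenvectorUnitary : Matrix n n ℝ).det * (∏ j, hM.eigenvalues j) *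
        ((hM.eigenvectorUnitary : Matrix n n ℝ)ᵀ).det
      = ((hM.eigenvectorUnitary : Matrix n n ℝ).det *
        ((hM.eigenvectorUnitary : Matrix n n ℝ)ᵀ).det) * ∏ j, hM.eigenvalues j := by ring
    _ = ∏ j, hM.eigenvalues j := by rw [this, one_mul]

end Spectral
variable {n : Type*} [Fintype n] [DecidableEq n]

lemma isHerm_symm {A : Matrix n n ℝ} (h : A.IsHermitian) : Aᵀ = A := by
  unfold Matrix.IsHermitian at h
  rwa [conjT_eq] at h

lemma isHerm_of_symm {A : Matrix n n ℝ} (h : Aᵀ = A) : A.IsHermitian := by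
  unfold Matrix.IsHermitian
  rwa [conjT_eq]

lemma inv_spectral {M : Matrix n n ℝ} (hM : M.PosDef) :
    M⁻¹ = (hM.1.eigenvectorUnitary : Matrix n n ℝ) * diagonal (fun j => (hM.1.eigenvalues j)⁻¹) *
      (hM.1.eigenvectorUnitary : Matrix n n ℝ)ᵀ := by
  apply Matrix.inv_eq_right_inv
  set U := (hM.1.eigenvectorUnitary : Matrix n n ℝ) with hU
  set f : n → ℝ := fun j => (hM.1.eigenvalues j)⁻¹ with hf
  have hdd : diagonal hM.1.eigenvalues * diagonal f = 1 := by
    rw [Matrix.diagonal_mul_diagonal, ← Matrix.diagonal_one]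
    have : (fun i => hM.1.eigenvalues i * f i) = fun _ => (1:ℝ) :=
      funext fun j => mul_inv_cancel₀ (hM.eigenvalues_pos j).ne'
    rw [this]
  have key : (U * diagonal hM.1.eigenvalues * Uᵀ) * (U * diagonal f * Uᵀ) = 1 := by
    calc (U * diagonal hM.1.eigenvalues * Uᵀ) * (U * diagonal f * Uᵀ)
        = U * diagonal hM.1.eigenvalues * (Uᵀ * U) * (diagonal f * Uᵀ) := by
          simp only [Matrix.mul_assoc]
      _ = U * (diagonal hM.1.eigenvalues * diagonal f) * Uᵀ := by
          rw [UtU hM.1, Matrix.mul_one]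
          simp only [Matrix.mul_assoc]
      _ = 1 := by rw [hdd, Matrix.mul_one, UUt hM.1]
  calc M * (U * diagonal f * Uᵀ)
      = (U * diagonal hM.1.eigenvalues * Uᵀ) * (U * diagonal f * Uᵀ) := by
        rw [← spectral_real hM.1]
    _ = 1 := key

lemma inv_le_one_of_one_le {M : Matrix n n ℝ} (hM : M.PosDef)
    (h : (M - 1).PosSemidef) : ((1 : Matrix n n ℝ) - M⁻¹).PosSemidef := by
  have hev : ∀ j, 1 ≤ hM.1.eigenvalues j := by
    intro j
    refine eig_ge_of_psd hM.1 ?_ j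
    rwa [one_smul]
  set U := (hM.1.eigenvectorUnitary : Matrix n n ℝ) with hU
  have h1 : (1 : Matrix n n ℝ) - M⁻¹ = U * diagonal (fun j => 1 - (hM.1.eigenvalues j)⁻¹) * Uᵀ := by
    rw [inv_spectral hM]
    have hone : (1 : Matrix n n ℝ) = U * diagonal (fun _ => (1:ℝ)) * Uᵀ := by
      rw [Matrix.diagonal_one, Matrix.mul_one, UUt hM.1]
    conv_lhs => rw [hone]
    rw [← Matrix.sub_mul, ← Matrix.mul_sub, Matrix.diagonal_sub]
  rw [h1]
  apply psd_conj
  rw [Matrix.posSemidef_diagonal_iff]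
  intro j
  have h2 : (hM.1.eigenvalues j)⁻¹ ≤ 1 := by
    rw [inv_le_one_iff₀]
    right; exact hev j
  linarith

lemma posdef_conj {M : Matrix n n ℝ} (hM : M.PosDef) {C : Matrix n n ℝ}
    (hC : IsUnit C.det) : (Cᵀ * M * C).PosDef := by
  refine Matrix.PosDef.of_dotProduct_mulVec_pos ?_ fun x hx => ?_
  · have h1 := hM.1
    unfold Matrix.IsHermitian at *
    rw [conjT_eq] at *
    rw [Matrix.transpose_mul, Matrix.transpose_mul, Matrix.transpose_transpose, h1,
      Matrix.mul_assoc]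
  · have hCx : C *ᵥ x ≠ 0 := by
      intro h0
      apply hx
      have h3 := congrArg (fun v => C⁻¹ *ᵥ v) h0
      simpa [Matrix.mulVec_mulVec, Matrix.nonsing_inv_mul C hC] using h3
    have h4 := hM.dotProduct_mulVec_pos hCx
    rw [star_trivial] at h4 ⊢
    rw [Matrix.mul_assoc, ← Matrix.mulVec_mulVec, ← Matrix.mulVec_mulVec,
      Matrix.dotProduct_mulVec, ← Matrix.mulVec_transpose, Matrix.transpose_transpose]
    exact h4

lemma inv_antitone {X Y : Matrix n n ℝ} (hX : X.PosDef) (hY : Y.PosDef)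
    (h : (Y - X).PosSemidef) : (X⁻¹ - Y⁻¹).PosSemidef := by
  set R := hX.posSemidef.sqrt with hR
  have hRsym : Rᵀ = R := isHerm_symm hX.posSemidef.posSemidef_sqrt.1
  have hRR : R * R = X := hX.posSemidef.sqrt_mul_self
  have hRdet : IsUnit R.det := by
    have hx : IsUnit X.det := isUnit_iff_ne_zero.mpr hX.det_pos.ne'
    rw [← hRR, Matrix.det_mul] at hx
    exact (IsUnit.mul_iff.mp hx).1
  have hRiR : R⁻¹ * R = 1 := Matrix.nonsing_inv_mul R hRdet
  have hRRi : R * R⁻¹ = 1 := Matrix.mul_nonsing_inv R hRdet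
  have hRisym : (R⁻¹)ᵀ = R⁻¹ := by rw [Matrix.transpose_nonsing_inv, hRsym]
  have hRidet : IsUnit (R⁻¹).det := R.isUnit_nonsing_inv_det hRdet
  have hYdet : IsUnit Y.det := isUnit_iff_ne_zero.mpr hY.det_pos.ne'
  set Q : Matrix n n ℝ := R⁻¹ * Y * R⁻¹ with hQ
  have hQd : Q.PosDef := by
    have := posdef_conj hY (C := R⁻¹) hRidet
    rwa [hRisym] at this
  have hQ1 : (Q - 1).PosSemidef := by
    have h2 := psd_conj h R⁻¹
    rw [hRisym] at h2
    have h3 : R⁻¹ * X * R⁻¹ = 1 := by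
      calc R⁻¹ * X * R⁻¹ = R⁻¹ * (R * R) * R⁻¹ := by rw [hRR]
        _ = R⁻¹ * R * (R * R⁻¹) := by simp only [Matrix.mul_assoc]
        _ = 1 := by rw [hRiR, hRRi, one_mul]
    have h4 : R⁻¹ * (Y - X) * R⁻¹ = Q - 1 := by
      rw [Matrix.mul_sub, Matrix.sub_mul, h3, hQ]
    rwa [h4] at h2
  have hQinv : Q⁻¹ = R * Y⁻¹ * R := by
    apply Matrix.inv_eq_right_inv
    calc R⁻¹ * Y * R⁻¹ * (R * Y⁻¹ * R)
        = R⁻¹ * Y * (R⁻¹ * R) * (Y⁻¹ * R) := by simp only [Matrix.mul_assoc]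
      _ = R⁻¹ * (Y * Y⁻¹) * R := by rw [hRiR, Matrix.mul_one]; simp only [Matrix.mul_assoc]
      _ = 1 := by rw [Matrix.mul_nonsing_inv Y hYdet, Matrix.mul_one, hRiR]
  have hfin := psd_conj (inv_le_one_of_one_le hQd hQ1) R⁻¹
  rw [hRisym, Matrix.mul_sub, Matrix.sub_mul, Matrix.mul_one, hQinv] at hfin
  have e1 : R⁻¹ * R⁻¹ = X⁻¹ := by rw [← Matrix.mul_inv_rev, hRR]
  have e2 : R⁻¹ * (R * Y⁻¹ * R) * R⁻¹ = Y⁻¹ := by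
    calc R⁻¹ * (R * Y⁻¹ * R) * R⁻¹ = (R⁻¹ * R) * Y⁻¹ * (R * R⁻¹) := by
          simp only [Matrix.mul_assoc]
      _ = Y⁻¹ := by rw [hRiR, hRRi, one_mul, Matrix.mul_one]
  rwa [e1, e2] at hfin

variable {n : Type*} [Fintype n] [DecidableEq n]

lemma det_one_add_psd {T : Matrix n n ℝ} (hT : T.PosSemidef) : 1 ≤ (1 + T).det := by
  have h1T : (1 + T).IsHermitian := by
    apply isHerm_of_symm
    rw [Matrix.transpose_add, Matrix.transpose_one, isHerm_symm hT.1]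
  rw [det_eq_prod_eigs h1T]
  have hj : ∀ j, 1 ≤ h1T.eigenvalues j := by
    intro j
    refine eig_ge_of_psd h1T ?_ j
    rw [one_smul]
    simpa using hT
  calc (1:ℝ) = ∏ _j : n, (1:ℝ) := by simp
    _ ≤ ∏ j, h1T.eigenvalues j :=
        Finset.prod_le_prod (fun j _ => zero_le_one) (fun j _ => hj j)

lemma det_one_add_psd_pos {T : Matrix n n ℝ} (hT : T.PosSemidef) : 0 < (1 + T).det :=
  lt_of_lt_of_le one_pos (det_one_add_psd hT)

lemma det_add_psd_eq {Q T : Matrix n n ℝ} (hQ : Q.PosDef) (hT : T.PosSemidef) :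
    (Q + T).det = Q.det * (1 + hT.sqrt * Q⁻¹ * hT.sqrt).det := by
  have hQdet : IsUnit Q.det := isUnit_iff_ne_zero.mpr hQ.det_pos.ne'
  have h1 : Q + T = Q * (1 + Q⁻¹ * T) := by
    rw [Matrix.mul_add, Matrix.mul_one, ← Matrix.mul_assoc, Matrix.mul_nonsing_inv Q hQdet,
      one_mul]
  rw [h1, Matrix.det_mul]
  congr 1
  have h2 : Q⁻¹ * T = (Q⁻¹ * hT.sqrt) * hT.sqrt := by
    rw [Matrix.mul_assoc, hT.sqrt_mul_self]
  rw [h2, Matrix.det_one_add_mul_comm, Matrix.mul_assoc]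

lemma psd_sandwich_inv {Q T : Matrix n n ℝ} (hQ : Q.PosDef) (hT : T.PosSemidef) :
    (hT.sqrt * Q⁻¹ * hT.sqrt).PosSemidef := by
  have := psd_conj hQ.inv.posSemidef hT.sqrt
  rwa [isHerm_symm hT.posSemidef_sqrt.1] at this

lemma det_le_det_add {Q T : Matrix n n ℝ} (hQ : Q.PosDef) (hT : T.PosSemidef) :
    Q.det ≤ (Q + T).det := by
  rw [det_add_psd_eq hQ hT]
  exact le_mul_of_one_le_right hQ.det_pos.le (det_one_add_psd (psd_sandwich_inv hQ hT))

lemma det_one_add_add_le {S T : Matrix n n ℝ} (hS : S.PosSemidef) (hT : T.PosSemidef) :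
    (1 + S + T).det ≤ (1 + S).det * (1 + T).det := by
  have hQ : (1 + S).PosDef := Matrix.PosDef.one.add_posSemidef hS
  rw [det_add_psd_eq hQ hT]
  refine mul_le_mul_of_nonneg_left ?_ hQ.det_pos.le
  set Rt := hT.sqrt with hRt
  have hRtsym : Rtᵀ = Rt := isHerm_symm hT.posSemidef_sqrt.1
  have hQ1 : ((1 + S) - 1).PosSemidef := by simpa using hS
  have hQinv := inv_le_one_of_one_le hQ hQ1
  have hdelta : (T - Rt * (1 + S)⁻¹ * Rt).PosSemidef := by
    have h2 := le_conj hQinv Rt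
    rw [hRtsym, Matrix.mul_one, hT.sqrt_mul_self] at h2
    exact h2
  have h3 := det_le_det_add (Matrix.PosDef.one.add_posSemidef (psd_sandwich_inv hQ hT))
    hdelta
  have h4 : 1 + Rt * (1 + S)⁻¹ * Rt + (T - Rt * (1 + S)⁻¹ * Rt) = 1 + T := by abel
  rwa [h4] at h3

variable {d : ℕ}

lemma eigs_eq {X : Matrix (Fin d) (Fin d) ℝ} (hX : X.IsHermitian) (i : Fin d) :
    eigs X i = hX.eigenvalues (Tuple.sort hX.eigenvalues i.rev) := by
  rw [eigs, dif_pos hX]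
  rfl

lemma eigs_nonneg {X : Matrix (Fin d) (Fin d) ℝ} (hX : X.PosSemidef) (i : Fin d) :
    0 ≤ eigs X i := by
  rw [eigs_eq hX.1]
  exact hX.eigenvalues_nonneg _

lemma det_one_add_eq_prod {X : Matrix (Fin d) (Fin d) ℝ} (hX : X.IsHermitian) :
    (1 + X).det = ∏ i, (1 + eigs X i) := by
  set U := (hX.eigenvectorUnitary : Matrix (Fin d) (Fin d) ℝ) with hU
  have h1 : 1 + X = U * diagonal (fun j => 1 + hX.eigenvalues j) * Uᵀ := by
    conv_lhs => rw [show X = U * diagonal hX.eigenvalues * Uᵀ from spectral_real hX]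
    have hone : (1 : Matrix (Fin d) (Fin d) ℝ) = U * diagonal (fun _ => (1:ℝ)) * Uᵀ := by
      rw [Matrix.diagonal_one, Matrix.mul_one, UUt hX]
    conv_lhs => rw [hone]
    rw [← Matrix.add_mul, ← Matrix.mul_add, Matrix.diagonal_add]
  rw [h1, Matrix.det_mul, Matrix.det_mul, Matrix.det_diagonal]
  have hdet : U.det * Uᵀ.det = 1 := by rw [← Matrix.det_mul, UUt hX, Matrix.det_one]
  have h2 : U.det * (∏ j, (1 + hX.eigenvalues j)) * Uᵀ.det
      = (U.det * Uᵀ.det) * ∏ j, (1 + hX.eigenvalues j) := by ring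
  rw [h2, hdet, one_mul]
  -- reindex by sort and rev
  have h3 : ∏ j, (1 + hX.eigenvalues j)
      = ∏ q, (1 + hX.eigenvalues (Tuple.sort hX.eigenvalues q)) :=
    (Equiv.prod_comp (Tuple.sort hX.eigenvalues) (fun j => 1 + hX.eigenvalues j)).symm
  have h4 : ∏ q, (1 + hX.eigenvalues (Tuple.sort hX.eigenvalues q))
      = ∏ i, (1 + hX.eigenvalues (Tuple.sort hX.eigenvalues (Fin.rev i))) :=
    (Equiv.prod_comp Fin.revPerm
      (fun q => 1 + hX.eigenvalues (Tuple.sort hX.eigenvalues q))).symm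
  rw [h3, h4]
  exact Finset.prod_congr rfl fun i _ => by rw [eigs_eq hX]

lemma eigs_zero_of_rank {X : Matrix (Fin d) (Fin d) ℝ} (hX : X.PosSemidef) {k : ℕ}
    (hr : X.rank ≤ k) {i : Fin d} (hi : k ≤ (i : ℕ)) : eigs X i = 0 := by
  by_contra h0
  have hpos : 0 < eigs X i := (eigs_nonneg hX i).lt_of_ne (Ne.symm h0)
  have hmono : Monotone (hX.1.eigenvalues ∘ Tuple.sort hX.1.eigenvalues) :=
    Tuple.monotone_sort hX.1.eigenvalues
  have hbound : ∀ q : Fin ((i : ℕ) + 1), (i.rev : ℕ) + (q : ℕ) < d := by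
    intro q
    have h1 : (i.rev : ℕ) = d - 1 - (i : ℕ) := by rw [Fin.val_rev]; omega
    have := q.isLt
    have := i.isLt
    omega
  have hnz : ∀ q : Fin ((i : ℕ) + 1),
      hX.1.eigenvalues (Tuple.sort hX.1.eigenvalues ⟨(i.rev : ℕ) + (q : ℕ), hbound q⟩) ≠ 0 := by
    intro q
    have hle : i.rev ≤ (⟨(i.rev : ℕ) + (q : ℕ), hbound q⟩ : Fin d) := by
      rw [Fin.le_def]
      simp
    have h2 := hmono hle
    rw [eigs_eq hX.1] at hpos
    exact (lt_of_lt_of_le hpos h2).ne'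
  let f : Fin ((i : ℕ) + 1) → {j : Fin d // hX.1.eigenvalues j ≠ 0} := fun q =>
    ⟨Tuple.sort hX.1.eigenvalues ⟨(i.rev : ℕ) + (q : ℕ), hbound q⟩, hnz q⟩
  have hfinj : Function.Injective f := by
    intro q1 q2 hq
    have h1 := congrArg (fun z => (z : {j : Fin d // hX.1.eigenvalues j ≠ 0}).1) hq
    simp only [f] at h1
    have h2 := (Tuple.sort hX.1.eigenvalues).injective h1
    have h3 := congrArg Fin.val h2
    simp only at h3
    ext
    omega
  have hcard := Fintype.card_le_of_injective f hfinj
  rw [Fintype.card_fin] at hcard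
  have hrank := hX.1.rank_eq_card_non_zero_eigs
  rw [hrank] at hr
  rw [Fintype.card_subtype] at hcard hr
  omega

variable {d : ℕ}

lemma eigs_le_of_le {X E : Matrix (Fin d) (Fin d) ℝ} (hX : X.IsHermitian) (hE : E.IsHermitian)
    {c : ℝ} (hc : 0 ≤ c) (h : (c • E - X).PosSemidef) (i : Fin d) :
    eigs X i ≤ c * eigs E i := by
  have hd : 0 < d := i.pos
  set Ux := (hX.eigenvectorUnitary : Matrix (Fin d) (Fin d) ℝ) with hUx
  set Ue := (hE.eigenvectorUnitary : Matrix (Fin d) (Fin d) ℝ) with hUe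
  set σ := Tuple.sort hX.eigenvalues with hσ
  set τ := Tuple.sort hE.eigenvalues with hτ
  set p : Fin d := i.rev with hp
  have hp1 : ((p : ℕ)) < d := p.isLt
  let f1 : (Fin d → ℝ) →ₗ[ℝ] (Fin (p : ℕ) → ℝ) :=
    { toFun := fun x q => (Uxᵀ *ᵥ x) (σ (Fin.castLE hp1.le q))
      map_add' := by
        intro x y
        funext q
        simp [Matrix.mulVec_add]
      map_smul' := by
        intro a x
        funext q
        simp [Matrix.mulVec_smul] }
  let f2 : (Fin d → ℝ) →ₗ[ℝ] (Fin (d - 1 - (p : ℕ)) → ℝ) :=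
    { toFun := fun x q => (Ueᵀ *ᵥ x)
        (τ ⟨(p : ℕ) + 1 + (q : ℕ), by have := q.isLt; omega⟩)
      map_add' := by
        intro x y
        funext q
        simp [Matrix.mulVec_add]
      map_smul' := by
        intro a x
        funext q
        simp [Matrix.mulVec_smul] }
  have hfr : Module.finrank ℝ ((Fin (p : ℕ) → ℝ) × (Fin (d - 1 - (p : ℕ)) → ℝ))
      < Module.finrank ℝ (Fin d → ℝ) := by
    rw [Module.finrank_prod]
    simp only [Module.finrank_pi, Fintype.card_fin]
    omega
  have hker := LinearMap.ker_ne_bot_of_finrank_lt (f := f1.prod f2) hfr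
  obtain ⟨x, hxker, hx0⟩ := (Submodule.ne_bot_iff _).mp hker
  have hFx : f1 x = 0 ∧ f2 x = 0 := by
    have := LinearMap.mem_ker.mp hxker
    rw [LinearMap.prod_apply] at this
    exact Prod.mk_inj.mp this
  have ha : ∀ j : Fin d, ((σ.symm j : Fin d) : ℕ) < (p : ℕ) → (Uxᵀ *ᵥ x) j = 0 := by
    intro j hj
    have h1 := congrFun hFx.1 ⟨((σ.symm j : Fin d) : ℕ), hj⟩
    have h2 : (Fin.castLE hp1.le ⟨((σ.symm j : Fin d) : ℕ), hj⟩ : Fin d) = σ.symm j := by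
      ext; rfl
    simp only [f1, LinearMap.coe_mk, AddHom.coe_mk, h2, Equiv.apply_symm_apply] at h1
    exact h1
  have hb : ∀ j : Fin d, (p : ℕ) < ((τ.symm j : Fin d) : ℕ) → (Ueᵀ *ᵥ x) j = 0 := by
    intro j hj
    have hq : ((τ.symm j : Fin d) : ℕ) - (p : ℕ) - 1 < d - 1 - (p : ℕ) := by
      have := (τ.symm j : Fin d).isLt
      omega
    have h1 := congrFun hFx.2 ⟨((τ.symm j : Fin d) : ℕ) - (p : ℕ) - 1, hq⟩
    have h2 : (⟨(p : ℕ) + 1 + (((τ.symm j : Fin d) : ℕ) - (p : ℕ) - 1), by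
        have := (τ.symm j : Fin d).isLt; omega⟩ : Fin d) = τ.symm j := by
      ext
      simp only
      omega
    simp only [f2, LinearMap.coe_mk, AddHom.coe_mk, h2, Equiv.apply_symm_apply] at h1
    exact h1
  have hXlow : eigs X i * (x ⬝ᵥ x) ≤ x ⬝ᵥ (X *ᵥ x) := by
    rw [quad_eq hX x, norm_eq hX x, Finset.mul_sum]
    refine Finset.sum_le_sum fun j _ => ?_
    by_cases haj : (Uxᵀ *ᵥ x) j = 0
    · rw [haj]
      simp
    · have hj : (p : ℕ) ≤ ((σ.symm j : Fin d) : ℕ) := by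
        by_contra hlt
        exact haj (ha j (by omega))
      have hmono : Monotone (hX.eigenvalues ∘ σ) := Tuple.monotone_sort hX.eigenvalues
      have h2 : (hX.eigenvalues ∘ σ) p ≤ (hX.eigenvalues ∘ σ) (σ.symm j) :=
        hmono (by rw [Fin.le_def]; exact hj)
      simp only [Function.comp_apply, Equiv.apply_symm_apply] at h2
      have h3 : eigs X i ≤ hX.eigenvalues j := by
        rw [eigs_eq hX]
        exact h2
      exact mul_le_mul_of_nonneg_right h3 (sq_nonneg _)
  have hEhigh : x ⬝ᵥ (E *ᵥ x) ≤ eigs E i * (x ⬝ᵥ x) := by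
    rw [quad_eq hE x, norm_eq hE x, Finset.mul_sum]
    refine Finset.sum_le_sum fun j _ => ?_
    by_cases hbj : (Ueᵀ *ᵥ x) j = 0
    · rw [hbj]
      simp
    · have hj : ((τ.symm j : Fin d) : ℕ) ≤ (p : ℕ) := by
        by_contra hlt
        exact hbj (hb j (by omega))
      have hmono : Monotone (hE.eigenvalues ∘ τ) := Tuple.monotone_sort hE.eigenvalues
      have h2 : (hE.eigenvalues ∘ τ) (τ.symm j) ≤ (hE.eigenvalues ∘ τ) p :=
        hmono (by rw [Fin.le_def]; exact hj)
      simp only [Function.comp_apply, Equiv.apply_symm_apply] at h2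
      have h3 : hE.eigenvalues j ≤ eigs E i := by
        rw [eigs_eq hE]
        exact h2
      exact mul_le_mul_of_nonneg_right h3 (sq_nonneg _)
  have hmid : x ⬝ᵥ (X *ᵥ x) ≤ c * (x ⬝ᵥ (E *ᵥ x)) := by
    have h2 := h.dotProduct_mulVec_nonneg x
    rw [star_trivial, Matrix.sub_mulVec, Matrix.smul_mulVec, dotProduct_sub,
      dotProduct_smul, smul_eq_mul] at h2
    linarith
  have hxx : 0 < x ⬝ᵥ x := dot_self_pos hx0
  have hchain : eigs X i * (x ⬝ᵥ x) ≤ (c * eigs E i) * (x ⬝ᵥ x) := by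
    calc eigs X i * (x ⬝ᵥ x) ≤ x ⬝ᵥ (X *ᵥ x) := hXlow
      _ ≤ c * (x ⬝ᵥ (E *ᵥ x)) := hmid
      _ ≤ c * (eigs E i * (x ⬝ᵥ x)) := mul_le_mul_of_nonneg_left hEhigh hc
      _ = (c * eigs E i) * (x ⬝ᵥ x) := by ring
  exact le_of_mul_le_mul_right hchain hxx


end EigAux

open EigAux

/-- Term (b) of the paper's error analysis: difference of log-dets under perturbation of
the effective noise covariance. -/
theorem stmt11 (d r k : ℕ)
    (Mhat : Matrix (Fin d) (Fin d) ℝ) (hMhat : Mhat.PosSemidef)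
    (hrank : Mhat.rank ≤ k)
    (ζ1 : ℝ)
    (hζ1 : IsGreatest {μ : ℝ | ∃ v : Fin d → ℝ, v ≠ 0 ∧ Mhat *ᵥ v = μ • v} ζ1)
    (E : Matrix (Fin d) (Fin d) ℝ) (hE : E.PosSemidef)
    (W : Matrix (Fin r) (Fin d) ℝ) (hW : W * Wᵀ = 1)
    (G Ghat : Matrix (Fin r) (Fin r) ℝ) (hG : G.PosDef) (hGhat : Ghat.PosDef)
    (hGG : G - Ghat = W * E * Wᵀ)
    (σ2 : ℝ) (hσ2 : 0 < σ2)
    (hGσ : (G - σ2 • (1 : Matrix (Fin r) (Fin r) ℝ)).PosSemidef)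
    (hGhatσ : (Ghat - σ2 • (1 : Matrix (Fin r) (Fin r) ℝ)).PosSemidef)
    (L Lhat : Matrix (Fin r) (Fin r) ℝ)
    (hL : L * Lᵀ = G⁻¹) (hLhat : Lhat * Lhatᵀ = Ghat⁻¹) :
    |(1 / 2) * Real.log (1 + Lᵀ * W * Mhat * Wᵀ * L).det -
        (1 / 2) * Real.log (1 + Lhatᵀ * W * Mhat * Wᵀ * Lhat).det| ≤
      (1 / 2) * ∑ i ∈ Finset.univ.filter (fun i : Fin d => (i : ℕ) < k),
          Real.log (1 + eigs E i * ζ1 / (σ2 * σ2)) := by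
  classical
  -- basic scalar facts
  have hζ1nn : 0 ≤ ζ1 := by
    obtain ⟨v, hv0, hveq⟩ := hζ1.1
    have h1 := hMhat.dotProduct_mulVec_nonneg v
    rw [star_trivial, hveq, dotProduct_smul, smul_eq_mul] at h1
    have h2 : 0 < v ⬝ᵥ v := dot_self_pos hv0
    nlinarith
  set c : ℝ := ζ1 / (σ2 * σ2) with hcdef
  have hcnn : 0 ≤ c := div_nonneg hζ1nn (by positivity)
  have hMhatle : (ζ1 • (1 : Matrix (Fin d) (Fin d) ℝ) - Mhat).PosSemidef := by
    refine psd_smul_one_sub hMhat.1 fun j => ?_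
    exact hζ1.2 ⟨⇑(hMhat.1.eigenvectorBasis j), eigenvectorBasis_ne_zero hMhat.1 j,
      hMhat.1.mulVec_eigenvectorBasis j⟩
  -- A and its square root
  set A : Matrix (Fin r) (Fin r) ℝ := W * Mhat * Wᵀ with hAdef
  have hA : A.PosSemidef := psd_conj hMhat W
  set Ra := hA.sqrt with hRa
  have hRasym : Raᵀ = Ra := isHerm_symm hA.posSemidef_sqrt.1
  have hRaRa : Ra * Ra = A := hA.sqrt_mul_self
  have hGdet : IsUnit G.det := isUnit_iff_ne_zero.mpr hG.det_pos.ne'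
  have hGhatdet : IsUnit Ghat.det := isUnit_iff_ne_zero.mpr hGhat.det_pos.ne'
  -- rewrite the two determinants
  have hdet1 : (1 + Lᵀ * W * Mhat * Wᵀ * L).det = (1 + Ra * G⁻¹ * Ra).det := by
    have e1 : Lᵀ * W * Mhat * Wᵀ = Lᵀ * A := by simp only [hAdef, Matrix.mul_assoc]
    rw [e1, Matrix.det_one_add_mul_comm (Lᵀ * A) L]
    have e2 : L * (Lᵀ * A) = G⁻¹ * A := by rw [← Matrix.mul_assoc, hL]
    rw [e2, ← hRaRa, ← Matrix.mul_assoc]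
    rw [Matrix.det_one_add_mul_comm (G⁻¹ * Ra) Ra, ← Matrix.mul_assoc]
  have hdet2 : (1 + Lhatᵀ * W * Mhat * Wᵀ * Lhat).det = (1 + Ra * Ghat⁻¹ * Ra).det := by
    have e1 : Lhatᵀ * W * Mhat * Wᵀ = Lhatᵀ * A := by simp only [hAdef, Matrix.mul_assoc]
    rw [e1, Matrix.det_one_add_mul_comm (Lhatᵀ * A) Lhat]
    have e2 : Lhat * (Lhatᵀ * A) = Ghat⁻¹ * A := by rw [← Matrix.mul_assoc, hLhat]
    rw [e2, ← hRaRa, ← Matrix.mul_assoc]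
    rw [Matrix.det_one_add_mul_comm (Ghat⁻¹ * Ra) Ra, ← Matrix.mul_assoc]
  -- S, Shat, T
  set S := Ra * G⁻¹ * Ra with hSdef
  set Shat := Ra * Ghat⁻¹ * Ra with hShatdef
  have hS : S.PosSemidef := by
    have := psd_conj hG.inv.posSemidef Ra
    rwa [hRasym] at this
  have hShat : Shat.PosSemidef := by
    have := psd_conj hGhat.inv.posSemidef Ra
    rwa [hRasym] at this
  have hWE : (W * E * Wᵀ).PosSemidef := psd_conj hE W
  have hGmGhat : (G - Ghat).PosSemidef := by rw [hGG]; exact hWE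
  have hinvdiff : (Ghat⁻¹ - G⁻¹).PosSemidef := inv_antitone hGhat hG hGmGhat
  set T := Ra * (Ghat⁻¹ - G⁻¹) * Ra with hTdef
  have hT : T.PosSemidef := by
    have := psd_conj hinvdiff Ra
    rwa [hRasym] at this
  have hST : Shat = S + T := by
    rw [hTdef, Matrix.mul_sub, Matrix.sub_mul, hSdef, hShatdef]
    abel
  -- determinant comparisons
  have hD1 : 1 ≤ (1 + S).det := det_one_add_psd hS
  have hD2 : 1 ≤ (1 + Shat).det := det_one_add_psd hShat
  have hD1pos : 0 < (1 + S).det := det_one_add_psd_pos hS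
  have hD2pos : 0 < (1 + Shat).det := det_one_add_psd_pos hShat
  have hD12 : (1 + S).det ≤ (1 + Shat).det := by
    have := det_le_det_add (Matrix.PosDef.one.add_posSemidef hS) hT
    rwa [add_assoc, ← hST] at this
  have hratio : (1 + Shat).det ≤ (1 + S).det * (1 + T).det := by
    have := det_one_add_add_le hS hT
    rwa [add_assoc, ← hST] at this
  -- bound T by T'
  have hCsym : (Ghat⁻¹ - G⁻¹)ᵀ = Ghat⁻¹ - G⁻¹ := by
    rw [Matrix.transpose_sub, isHerm_symm hGhat.inv.1, isHerm_symm hG.inv.1]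
  have hid : Ghat⁻¹ * (G - Ghat) * Ghat⁻¹
      = (Ghat⁻¹ - G⁻¹) + (Ghat⁻¹ - G⁻¹) * G * (Ghat⁻¹ - G⁻¹) := by
    have hBG : Ghat⁻¹ * Ghat = 1 := Matrix.nonsing_inv_mul Ghat hGhatdet
    have hGG' : G * G⁻¹ = 1 := Matrix.mul_nonsing_inv G hGdet
    have e1 : Ghat⁻¹ * (G - Ghat) * Ghat⁻¹ = Ghat⁻¹ * G * Ghat⁻¹ - Ghat⁻¹ := by
      rw [Matrix.mul_sub, Matrix.sub_mul, hBG, one_mul]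
    have e2 : (Ghat⁻¹ - G⁻¹) * G * (Ghat⁻¹ - G⁻¹)
        = Ghat⁻¹ * G * Ghat⁻¹ - Ghat⁻¹ - Ghat⁻¹ + G⁻¹ := by
      simp only [Matrix.sub_mul, Matrix.mul_sub]
      have e3 : Ghat⁻¹ * G * G⁻¹ = Ghat⁻¹ := by
        rw [Matrix.mul_assoc, hGG', Matrix.mul_one]
      have e4 : G⁻¹ * G * Ghat⁻¹ = Ghat⁻¹ := by
        rw [Matrix.nonsing_inv_mul G hGdet, one_mul]
      have e5 : G⁻¹ * G * G⁻¹ = G⁻¹ := by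
        rw [Matrix.nonsing_inv_mul G hGdet, one_mul]
      rw [e3, e4, e5]
      abel
    rw [e1, e2]
    abel
  have hCGC : ((Ghat⁻¹ - G⁻¹) * G * (Ghat⁻¹ - G⁻¹)).PosSemidef := by
    have := psd_conj hG.posSemidef (Ghat⁻¹ - G⁻¹)
    rwa [hCsym] at this
  have hTT'core : ((Ghat⁻¹ * (W * E * Wᵀ) * Ghat⁻¹) - (Ghat⁻¹ - G⁻¹)).PosSemidef := by
    have e0 : Ghat⁻¹ * (W * E * Wᵀ) * Ghat⁻¹ - (Ghat⁻¹ - G⁻¹)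
        = (Ghat⁻¹ - G⁻¹) * G * (Ghat⁻¹ - G⁻¹) := by
      rw [← hGG, hid]
      abel
    rw [e0]
    exact hCGC
  set T' := Ra * (Ghat⁻¹ * (W * E * Wᵀ) * Ghat⁻¹) * Ra with hT'def
  have hTleT' : (T' - T).PosSemidef := by
    have := le_conj hTT'core Ra
    rwa [hRasym] at this
  have hT' : T'.PosSemidef := by
    have h0 := psd_conj (psd_conj hE W) Ghat⁻¹
    rw [isHerm_symm hGhat.inv.1] at h0
    have := psd_conj h0 Ra
    rwa [hRasym] at this
  have hdetT : (1 + T).det ≤ (1 + T').det := by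
    have := det_le_det_add (Matrix.PosDef.one.add_posSemidef hT) hTleT'
    rwa [add_assoc, add_sub_cancel] at this
  -- express T' via a d × d matrix X
  set Re := hE.sqrt with hRe
  have hResym : Reᵀ = Re := isHerm_symm hE.posSemidef_sqrt.1
  have hReRe : Re * Re = E := hE.sqrt_mul_self
  set F : Matrix (Fin r) (Fin d) ℝ := Ra * Ghat⁻¹ * W * Re with hFdef
  have hFt : Fᵀ = Re * (Wᵀ * (Ghat⁻¹ * Ra)) := by
    rw [hFdef]
    simp only [Matrix.transpose_mul, hResym, hRasym, isHerm_symm hGhat.inv.1, Matrix.mul_assoc]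
  have hT'F : T' = F * Fᵀ := by
    rw [hT'def, hFdef, hFt]
    have eE : (W * E * Wᵀ) = W * (Re * (Re * Wᵀ)) := by
      rw [← hReRe]
      simp only [Matrix.mul_assoc]
    rw [eE]
    simp only [Matrix.mul_assoc]
  set X : Matrix (Fin d) (Fin d) ℝ := Fᵀ * F with hXdef
  have hX : X.PosSemidef := by
    have := Matrix.posSemidef_conjTranspose_mul_self F
    rwa [conjT_eq] at this
  have hdetTX : (1 + T').det = (1 + X).det := by
    rw [hT'F, hXdef, Matrix.det_one_add_mul_comm F Fᵀ]
  -- X = P * Mhat * Pᵀ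
  set P : Matrix (Fin d) (Fin d) ℝ := Re * Wᵀ * Ghat⁻¹ * W with hPdef
  have hPt : Pᵀ = Wᵀ * (Ghat⁻¹ * (W * Re)) := by
    rw [hPdef]
    simp only [Matrix.transpose_mul, Matrix.transpose_transpose, hResym,
      isHerm_symm hGhat.inv.1, Matrix.mul_assoc]
  have hXP : X = P * Mhat * Pᵀ := by
    rw [hXdef, hFt, hFdef, hPt, hPdef]
    have eRaZ : Ra * (Ra * (Ghat⁻¹ * (W * Re))) = W * (Mhat * (Wᵀ * (Ghat⁻¹ * (W * Re)))) := by
      rw [← Matrix.mul_assoc Ra Ra _, hRaRa, hAdef]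
      simp only [Matrix.mul_assoc]
    simp only [Matrix.mul_assoc]
    rw [eRaZ]
  have hXrank : X.rank ≤ k := by
    rw [hXP]
    calc (P * Mhat * Pᵀ).rank ≤ (P * Mhat).rank := Matrix.rank_mul_le_left _ _
      _ ≤ Mhat.rank := Matrix.rank_mul_le_right _ _
      _ ≤ k := hrank
  -- X ⪯ c • E
  have hσ1 : (σ2 • (1 : Matrix (Fin r) (Fin r) ℝ)).PosDef := by
    refine Matrix.PosDef.of_dotProduct_mulVec_pos (isHerm_of_symm (by rw [Matrix.transpose_smul, Matrix.transpose_one])) fun x hx => ?_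
    rw [star_trivial, Matrix.smul_mulVec, Matrix.one_mulVec, dotProduct_smul, smul_eq_mul]
    exact mul_pos hσ2 (dot_self_pos hx)
  have hinvσ : (σ2 • (1 : Matrix (Fin r) (Fin r) ℝ))⁻¹ = σ2⁻¹ • 1 := by
    apply Matrix.inv_eq_right_inv
    rw [Matrix.smul_mul, Matrix.mul_smul, Matrix.one_mul, smul_smul,
      mul_inv_cancel₀ hσ2.ne']
    exact one_smul _ _
  have hGhatinvle : (σ2⁻¹ • (1 : Matrix (Fin r) (Fin r) ℝ) - Ghat⁻¹).PosSemidef := by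
    have := inv_antitone hσ1 hGhat hGhatσ
    rwa [hinvσ] at this
  -- Ghat⁻¹ * Ghat⁻¹ ⪯ (σ2*σ2)⁻¹ • 1
  have hZZ : ((σ2 * σ2)⁻¹ • (1 : Matrix (Fin r) (Fin r) ℝ) - Ghat⁻¹ * Ghat⁻¹).PosSemidef := by
    set Z := Ghat⁻¹ with hZ
    have hZpsd : Z.PosSemidef := hGhat.inv.posSemidef
    set Rz := hZpsd.sqrt with hRz
    have hRzsym : Rzᵀ = Rz := isHerm_symm hZpsd.posSemidef_sqrt.1
    have hRzRz : Rz * Rz = Z := hZpsd.sqrt_mul_self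
    have step1 : (σ2⁻¹ • Z - Z * Z).PosSemidef := by
      have h0 := psd_conj hGhatinvle Rz
      rw [hRzsym, Matrix.mul_sub, Matrix.sub_mul] at h0
      have e1 : Rz * (σ2⁻¹ • (1 : Matrix (Fin r) (Fin r) ℝ)) * Rz = σ2⁻¹ • Z := by
        rw [Matrix.mul_smul, Matrix.mul_one, Matrix.smul_mul, hRzRz]
      have e2 : Rz * Z * Rz = Z * Z := by
        rw [← hRzRz]
        simp only [Matrix.mul_assoc]
      rwa [e1, e2] at h0
    have step2 : ((σ2 * σ2)⁻¹ • (1 : Matrix (Fin r) (Fin r) ℝ) - σ2⁻¹ • Z).PosSemidef := by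
      have h0 := psd_smul hGhatinvle (c := σ2⁻¹) (inv_nonneg.mpr hσ2.le)
      rw [smul_sub, smul_smul, ← mul_inv] at h0
      exact h0
    exact le_trans' step1 step2
  -- Wᵀ W ⪯ 1
  have hWtW : ((1 : Matrix (Fin d) (Fin d) ℝ) - Wᵀ * W).PosSemidef := by
    have hsym : ((1 : Matrix (Fin d) (Fin d) ℝ) - Wᵀ * W)ᵀ = 1 - Wᵀ * W := by
      rw [Matrix.transpose_sub, Matrix.transpose_one, Matrix.transpose_mul,
        Matrix.transpose_transpose]
    have hidem : ((1 : Matrix (Fin d) (Fin d) ℝ) - Wᵀ * W) * (1 - Wᵀ * W) = 1 - Wᵀ * W := by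
      have e1 : Wᵀ * W * (Wᵀ * W) = Wᵀ * W := by
        calc Wᵀ * W * (Wᵀ * W) = Wᵀ * (W * Wᵀ) * W := by simp only [Matrix.mul_assoc]
          _ = Wᵀ * W := by rw [hW, Matrix.mul_one]
      simp only [Matrix.mul_sub, Matrix.sub_mul, Matrix.mul_one, Matrix.one_mul, e1]
      abel
    have h0 := Matrix.posSemidef_conjTranspose_mul_self ((1 : Matrix (Fin d) (Fin d) ℝ) - Wᵀ * W)
    rw [conjT_eq, hsym, hidem] at h0
    exact h0
  -- P * Pᵀ ⪯ (σ2*σ2)⁻¹ • E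
  have hPPt : ((σ2 * σ2)⁻¹ • E - P * Pᵀ).PosSemidef := by
    have et : (Re * Wᵀ)ᵀ = W * Re := by
      rw [Matrix.transpose_mul, hResym, Matrix.transpose_transpose]
    have ePP : P * Pᵀ = (Re * Wᵀ) * (Ghat⁻¹ * Ghat⁻¹) * (Re * Wᵀ)ᵀ := by
      rw [hPt, hPdef, et]
      calc Re * Wᵀ * Ghat⁻¹ * W * (Wᵀ * (Ghat⁻¹ * (W * Re)))
          = Re * Wᵀ * Ghat⁻¹ * ((W * Wᵀ) * (Ghat⁻¹ * (W * Re))) := by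
            simp only [Matrix.mul_assoc]
        _ = Re * Wᵀ * (Ghat⁻¹ * Ghat⁻¹) * (W * Re) := by
            rw [hW, Matrix.one_mul]
            simp only [Matrix.mul_assoc]
    have step1 := le_conj hZZ (Re * Wᵀ)
    rw [← ePP] at step1
    have e2 : (Re * Wᵀ) * ((σ2 * σ2)⁻¹ • (1 : Matrix (Fin r) (Fin r) ℝ)) * (Re * Wᵀ)ᵀ
        = (σ2 * σ2)⁻¹ • (Re * (Wᵀ * W) * Re) := by
      rw [et, Matrix.mul_smul, Matrix.mul_one, Matrix.smul_mul]
      congr 1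
      simp only [Matrix.mul_assoc]
    rw [e2] at step1
    have step2 : ((σ2 * σ2)⁻¹ • E - (σ2 * σ2)⁻¹ • (Re * (Wᵀ * W) * Re)).PosSemidef := by
      have h0 := le_conj hWtW Re
      rw [hResym, Matrix.mul_one, hReRe] at h0
      have h1 := psd_smul h0 (c := (σ2 * σ2)⁻¹) (by positivity)
      rwa [smul_sub] at h1
    exact le_trans' step1 step2
  have hXle : (c • E - X).PosSemidef := by
    have step1 : (ζ1 • (P * Pᵀ) - X).PosSemidef := by
      have h0 := le_conj hMhatle P
      rw [Matrix.mul_smul, Matrix.mul_one, Matrix.smul_mul, ← hXP] at h0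
      exact h0
    have step2 : (c • E - ζ1 • (P * Pᵀ)).PosSemidef := by
      have h0 := psd_smul hPPt hζ1nn
      rw [smul_sub, smul_smul] at h0
      have e : ζ1 * (σ2 * σ2)⁻¹ = c := by
        rw [hcdef, div_eq_mul_inv]
      rwa [e] at h0
    exact le_trans' step1 step2
  -- eigenvalue bound and determinant product bound
  have heig : ∀ i : Fin d, eigs X i ≤ c * eigs E i := fun i =>
    eigs_le_of_le hX.1 hE.1 hcnn hXle i
  have hprod : (1 + X).det ≤ ∏ i ∈ Finset.univ.filter (fun i : Fin d => (i : ℕ) < k),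
      (1 + c * eigs E i) := by
    rw [det_one_add_eq_prod hX.1]
    have hsplit : ∏ i, (1 + eigs X i)
        = (∏ i ∈ Finset.univ.filter (fun i : Fin d => (i : ℕ) < k), (1 + eigs X i)) *
          ∏ i ∈ Finset.univ.filter (fun i : Fin d => ¬ (i : ℕ) < k), (1 + eigs X i) :=
      (Finset.prod_filter_mul_prod_filter_not Finset.univ _ _).symm
    have hone : ∏ i ∈ Finset.univ.filter (fun i : Fin d => ¬ (i : ℕ) < k), (1 + eigs X i) = 1 := by
      refine Finset.prod_eq_one fun i hi => ?_
      rw [Finset.mem_filter] at hi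
      rw [eigs_zero_of_rank hX hXrank (not_lt.mp hi.2), add_zero]
    rw [hsplit, hone, mul_one]
    refine Finset.prod_le_prod (fun i _ => ?_) (fun i _ => ?_)
    · have := eigs_nonneg hX i
      linarith
    · have := heig i
      linarith
  have hPk1 : (1:ℝ) ≤ ∏ i ∈ Finset.univ.filter (fun i : Fin d => (i : ℕ) < k),
      (1 + c * eigs E i) := by
    calc (1:ℝ) = ∏ _i ∈ Finset.univ.filter (fun i : Fin d => (i : ℕ) < k), (1:ℝ) := by simp
      _ ≤ _ := Finset.prod_le_prod (fun i _ => zero_le_one) (fun i _ => by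
          have := mul_nonneg hcnn (eigs_nonneg hE i)
          linarith)
  have hPkpos : (0:ℝ) < ∏ i ∈ Finset.univ.filter (fun i : Fin d => (i : ℕ) < k),
      (1 + c * eigs E i) := lt_of_lt_of_le one_pos hPk1
  -- final chain on determinants
  have hfinal : (1 + Shat).det ≤ (1 + S).det *
      ∏ i ∈ Finset.univ.filter (fun i : Fin d => (i : ℕ) < k), (1 + c * eigs E i) := by
    calc (1 + Shat).det ≤ (1 + S).det * (1 + T).det := hratio
      _ ≤ (1 + S).det * (1 + T').det := by
          have := hdetT
          nlinarith [det_one_add_psd_pos hT]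
      _ = (1 + S).det * (1 + X).det := by rw [hdetTX]
      _ ≤ _ := by
          have := hprod
          nlinarith [det_one_add_psd_pos hX, hD1pos]
  -- logarithms
  rw [hdet1, hdet2]
  have hlog12 : Real.log ((1 + S).det) ≤ Real.log ((1 + Shat).det) :=
    Real.log_le_log hD1pos hD12
  have habs : |(1 / 2) * Real.log (1 + S).det - (1 / 2) * Real.log (1 + Shat).det|
      = (1 / 2) * (Real.log (1 + Shat).det - Real.log (1 + S).det) := by
    rw [abs_of_nonpos (by linarith)]
    ring
  rw [habs]
  have hlog2 : Real.log ((1 + Shat).det) - Real.log ((1 + S).det)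
      ≤ Real.log (∏ i ∈ Finset.univ.filter (fun i : Fin d => (i : ℕ) < k),
          (1 + c * eigs E i)) := by
    have h1 : Real.log ((1 + Shat).det) ≤ Real.log ((1 + S).det *
        ∏ i ∈ Finset.univ.filter (fun i : Fin d => (i : ℕ) < k), (1 + c * eigs E i)) :=
      Real.log_le_log hD2pos hfinal
    rw [Real.log_mul hD1pos.ne' hPkpos.ne'] at h1
    linarith
  have hlogprod : Real.log (∏ i ∈ Finset.univ.filter (fun i : Fin d => (i : ℕ) < k),
        (1 + c * eigs E i))
      = ∑ i ∈ Finset.univ.filter (fun i : Fin d => (i : ℕ) < k),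
          Real.log (1 + eigs E i * ζ1 / (σ2 * σ2)) := by
    rw [Real.log_prod]
    · refine Finset.sum_congr rfl fun i _ => ?_
      congr 1
      rw [hcdef]
      ring
    · intro i _
      have := mul_nonneg hcnn (eigs_nonneg hE i)
      positivity
  linarith [hlog2, hlogprod.symm ▸ hlog2]
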